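/- Let A be an n×n real matrix, and for i = 1,…,m let B_i ∈ ℝ^{n×1}, C_i ∈ ℝ^{1×n}, and σ_i ≥ 0. Suppose Q is an n×n symmetric positive definite matrix and α_1,…,α_m are positive reals such that (1) A Q + Q Aᵀ + Σᵢ α_i B_i B_iᵀ is negative definite, and (2) σ_i² C_i Q C_iᵀ < α_i for every i. Then A Q + Q Aᵀ + Σᵢ σ_i² B_i C_i Q C_iᵀ B_iᵀ is negative definite. -/

import Mathlib

open Matrix

private lemma psd_smul {n : ℕ} {M : Matrix (Fin n) (Fin n) ℝ} (hM : M.PosSemidef)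
    {t : ℝ} (ht : 0 ≤ t) : (t • M).PosSemidef := by
  refine ⟨?_, fun x => ?_⟩
  · have h := hM.1.eq
    unfold Matrix.IsHermitian
    rw [conjTranspose_smul, h]
    simp
  · exact (hM.smul ht).2 x

theorem splitting_forward
    (n m : ℕ) (A : Matrix (Fin n) (Fin n) ℝ)
    (B : Fin m → Matrix (Fin n) (Fin 1) ℝ) (C : Fin m → Matrix (Fin 1) (Fin n) ℝ)
    (σ : Fin m → ℝ) (hσ : ∀ i, 0 ≤ σ i)
    (Q : Matrix (Fin n) (Fin n) ℝ) (hQ : Q.PosDef)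
    (α : Fin m → ℝ) (hα : ∀ i, 0 < α i)
    (h1 : (-(A * Q + Q * Aᵀ + ∑ i, α i • (B i * (B i)ᵀ))).PosDef)
    (h2 : ∀ i, σ i ^ 2 * ((C i * Q * (C i)ᵀ) 0 0) < α i) :
    (-(A * Q + Q * Aᵀ + ∑ i, σ i ^ 2 • (B i * C i * Q * (C i)ᵀ * (B i)ᵀ))).PosDef := by
  set c : Fin m → ℝ := fun i => (C i * Q * (C i)ᵀ) 0 0 with hc
  have hcQ : ∀ i, (C i * Q * (C i)ᵀ).PosSemidef := by
    intro i
    have := hQ.posSemidef.mul_mul_conjTranspose_same (C i)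
    simpa using this
  have hcnn : ∀ i, 0 ≤ c i := by
    intro i
    have := (hcQ i).dotProduct_mulVec_nonneg (fun _ => 1)
    simpa [dotProduct, mulVec, Fin.sum_univ_one] using this
  have key : ∀ i, B i * C i * Q * (C i)ᵀ * (B i)ᵀ = c i • (B i * (B i)ᵀ) := by
    intro i
    have h11 : C i * Q * (C i)ᵀ = c i • (1 : Matrix (Fin 1) (Fin 1) ℝ) := by
      ext a b
      fin_cases a; fin_cases b
      simp [hc]
    calc B i * C i * Q * (C i)ᵀ * (B i)ᵀ
        = B i * (C i * Q * (C i)ᵀ) * (B i)ᵀ := by simp [Matrix.mul_assoc]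
      _ = c i • (B i * (B i)ᵀ) := by rw [h11]; simp [Matrix.mul_smul, Matrix.smul_mul]
  have hrw : (∑ i, σ i ^ 2 • (B i * C i * Q * (C i)ᵀ * (B i)ᵀ))
      = ∑ i, (σ i ^ 2 * c i) • (B i * (B i)ᵀ) := by
    refine Finset.sum_congr rfl fun i _ => ?_
    rw [key i, smul_smul]
  rw [hrw]
  have hD : (∑ i, (α i - σ i ^ 2 * c i) • (B i * (B i)ᵀ))
      = (∑ i, α i • (B i * (B i)ᵀ)) - (∑ i, (σ i ^ 2 * c i) • (B i * (B i)ᵀ)) := by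
    rw [← Finset.sum_sub_distrib]
    simp [sub_smul]
  have heq : -(A * Q + Q * Aᵀ + ∑ i, (σ i ^ 2 * c i) • (B i * (B i)ᵀ))
      = -(A * Q + Q * Aᵀ + ∑ i, α i • (B i * (B i)ᵀ))
        + ∑ i, (α i - σ i ^ 2 * c i) • (B i * (B i)ᵀ) := by
    rw [hD]; abel
  rw [heq]
  refine h1.add_posSemidef ?_
  refine Finset.sum_induction _ _ (fun a b ha hb => ha.add hb) (Matrix.PosSemidef.zero) ?_
  intro i _
  refine psd_smul ?_ ?_
  · have := Matrix.posSemidef_self_mul_conjTranspose (B i)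
    simpa using this
  · exact sub_nonneg.mpr (le_of_lt (h2 i))
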